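/- arXiv:1007.5134 — 3 statements merged into one kernel-verified Lean document; each statement's English description precedes it below -/
import Mathlib

section
/- If f is an entire function of exponential type at most πb whose restriction to the real line lies in L^p(ℝ) for some 1 ≤ p ≤ ∞, then for every real c the shifted function t ↦ f(t+ic) satisfies ‖f(·+ic)‖_{L^p(ℝ)} ≤ e^{πb|c|}‖f‖_{L^p(ℝ)} (Plancherel–Polya inequality). -/
open MeasureTheory Complex Real Set Filter Topology


local notation "conj'" => starRingEnd ℂ

lemma ofReal_norm_eq_coe_nnnorm {E : Type*} [SeminormedAddCommGroup E] (x : E) :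
    ENNReal.ofReal ‖x‖ = (‖x‖₊ : ENNReal) := ofReal_norm x

lemma differentiable_reflect (f : ℂ → ℂ) (hf : Differentiable ℂ f) :
    Differentiable ℂ (fun z => conj' (f (conj' z))) := by
  intro z
  have h := (hf (conj' z)).hasDerivAt
  rw [hasDerivAt_iff_tendsto_slope] at h
  have hconj : Tendsto (fun w : ℂ => conj' w) (𝓝[≠] z) (𝓝[≠] (conj' z)) := by
    rw [tendsto_nhdsWithin_iff]
    constructor
    · exact ((Complex.continuous_conj.tendsto z)).mono_left nhdsWithin_le_nhds
    · filter_upwards [self_mem_nhdsWithin] with w hw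
      simpa using fun h' => hw ((starRingEnd ℂ).injective h')
  have h2 := ((Complex.continuous_conj.tendsto _).comp (h.comp hconj))
  have : HasDerivAt (fun w => conj' (f (conj' w))) (conj' (deriv f (conj' z))) z := by
    rw [hasDerivAt_iff_tendsto_slope]
    refine h2.congr' ?_
    filter_upwards [self_mem_nhdsWithin] with w hw
    simp only [Function.comp_apply, slope_def_field]
    rw [← map_sub, ← map_sub]
    rw [map_div₀, Complex.conj_conj]
  exact this.differentiableAt


lemma pl_upper_eps0 (f : ℂ → ℂ) (τ M ε : ℝ) (hτ : 0 ≤ τ) (hε : 0 < ε) (hM : 0 ≤ M)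
    (hd : Differentiable ℂ f)
    (C : ℝ) (hC : ∀ z : ℂ, ‖f z‖ ≤ C * Real.exp ((τ + ε) * ‖z‖))
    (hreal : ∀ t : ℝ, ‖f t‖ ≤ M) :
    ∀ z : ℂ, 0 ≤ z.im → ‖f z‖ ≤ M * Real.exp ((τ + ε) * z.im) := by
  have hτε : 0 < τ + ε := by linarith
  have hC0 : 0 ≤ C := by
    have h0 := hC 0
    simp only [norm_zero, mul_zero, Real.exp_zero, mul_one] at h0
    exact le_trans (norm_nonneg _) h0
  set g : ℂ → ℂ := fun z => f z * Complex.exp (Complex.I * (τ + ε) * z) with hg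
  have hgd : Differentiable ℂ g := hd.mul (by fun_prop)
  have hgnorm : ∀ z : ℂ, ‖g z‖ = ‖f z‖ * Real.exp (-(τ + ε) * z.im) := by
    intro z
    rw [hg]
    simp only [norm_mul, Complex.norm_exp]
    congr 2
    simp [Complex.mul_re, Complex.mul_im]
    ring
  have hgrow : ∀ z : ℂ, 0 ≤ z.im → ‖g z‖ ≤ C * Real.exp ((τ + ε) * ‖z‖) := by
    intro z hz
    rw [hgnorm]
    calc ‖f z‖ * Real.exp (-(τ + ε) * z.im) ≤ ‖f z‖ * 1 := by
          apply mul_le_mul_of_nonneg_left _ (norm_nonneg _)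
          rw [Real.exp_le_one_iff]
          nlinarith
      _ = ‖f z‖ := mul_one _
      _ ≤ C * Real.exp ((τ + ε) * ‖z‖) := hC z
  have him : ∀ x : ℝ, 0 ≤ x → ‖g ((x : ℂ) * Complex.I)‖ ≤ C := by
    intro x hx
    rw [hgnorm]
    have h1 : ((x : ℂ) * Complex.I).im = x := by simp
    have h2 : ‖(x : ℂ) * Complex.I‖ = x := by
      rw [norm_mul, Complex.norm_I, mul_one, Complex.norm_real, Real.norm_eq_abs,
        _root_.abs_of_nonneg hx]
    rw [h1]
    calc ‖f ((x:ℂ) * Complex.I)‖ * Real.exp (-(τ + ε) * x)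
        ≤ (C * Real.exp ((τ + ε) * x)) * Real.exp (-(τ + ε) * x) := by
          apply mul_le_mul_of_nonneg_right _ (Real.exp_pos _).le
          have := hC ((x:ℂ) * Complex.I)
          rwa [h2] at this
      _ = C := by
          rw [mul_assoc, ← Real.exp_add]
          have : (τ + ε) * x + -(τ + ε) * x = 0 := by ring
          rw [this, Real.exp_zero, mul_one]
  have hre : ∀ x : ℝ, ‖g (x : ℂ)‖ ≤ M := by
    intro x
    rw [hgnorm]
    simp only [Complex.ofReal_im, mul_zero, neg_zero, Real.exp_zero, mul_one]
    exact hreal x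
  set C₁ : ℝ := max M C with hC₁
  -- bound on the upper half plane by C₁ via quadrants
  have hquad : ∀ z : ℂ, 0 ≤ z.im → ‖g z‖ ≤ C₁ := by
    intro z hz
    have hBig : ∀ (S : Set ℂ), S ⊆ {z : ℂ | 0 ≤ z.im} →
        g =O[Bornology.cobounded ℂ ⊓ 𝓟 S] fun z => Real.exp ((τ + ε) * ‖z‖ ^ (1:ℝ)) := by
      intro S hS
      apply Asymptotics.IsBigO.of_bound C
      rw [Filter.eventually_inf_principal]
      filter_upwards with w hw
      have := hgrow w (hS hw)
      rw [Real.rpow_one]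
      rw [Real.norm_eq_abs, abs_of_pos (Real.exp_pos _)]
      simpa using this
    rcases le_or_gt 0 z.re with hzre | hzre
    · apply PhragmenLindelof.quadrant_I hgd.diffContOnCl ⟨1, one_lt_two, τ + ε, hBig _ ?_⟩
        (fun x _ => (hre x).trans (le_max_left _ _))
        (fun x hx => (him x hx).trans (le_max_right _ _)) hzre hz
      rintro w ⟨-, hw2⟩
      exact le_of_lt (Set.mem_Ioi.mp (Set.mem_preimage.mp hw2))
    · apply PhragmenLindelof.quadrant_II hgd.diffContOnCl ⟨1, one_lt_two, τ + ε, hBig _ ?_⟩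
        (fun x _ => (hre x).trans (le_max_left _ _))
        (fun x hx => (him x hx).trans (le_max_right _ _)) hzre.le hz
      rintro w ⟨-, hw2⟩
      exact le_of_lt (Set.mem_Ioi.mp (Set.mem_preimage.mp hw2))
  -- now the half-plane PL with sharp constant M
  have hhalf : ∀ z : ℂ, 0 ≤ z.im → ‖g z‖ ≤ M := by
    have key : ∀ w : ℂ, 0 ≤ w.re → ‖g (w * Complex.I)‖ ≤ M := by
      intro w hw
      apply PhragmenLindelof.right_half_plane_of_bounded_on_real
        ((hgd.comp (differentiable_id.mul_const _)).diffContOnCl)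
        ⟨1, one_lt_two, 0, ?_⟩ ?_ ?_ hw
      · apply Asymptotics.IsBigO.of_bound C₁
        rw [Filter.eventually_inf_principal]
        filter_upwards with u hu
        have hu' : 0 < u.re := hu
        have : 0 ≤ (u * Complex.I).im := by
          simp only [Complex.mul_I_im]
          exact hu'.le
        simpa [Real.norm_eq_abs, abs_of_pos (Real.exp_pos _)] using hquad _ this
      · refine ⟨C₁, Filter.eventually_map.2 ?_⟩
        filter_upwards [Filter.eventually_ge_atTop (0:ℝ)] with x hx
        refine hquad _ ?_
        simpa [Complex.mul_I_im] using hx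
      · intro x
        have hxI : (x : ℂ) * Complex.I * Complex.I = ((-x : ℝ) : ℂ) := by
          rw [mul_assoc, Complex.I_mul_I]; push_cast; ring
        simp only [Function.comp_apply, id_eq, hxI]
        exact hre (-x)
    intro z hz
    have h1 : (-(z * Complex.I)) * Complex.I = z := by
      rw [neg_mul, mul_assoc, Complex.I_mul_I, mul_neg_one, neg_neg]
    have h2 : 0 ≤ (-(z * Complex.I)).re := by
      simp only [Complex.neg_re, Complex.mul_I_re, neg_neg]; exact hz
    simpa [h1] using key _ h2
  intro z hz
  have := hhalf z hz
  rw [hgnorm] at this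
  have h3 : 0 < Real.exp (-(τ+ε) * z.im) := Real.exp_pos _
  have hzero : -(τ+ε) * z.im + (τ+ε) * z.im = 0 := by ring
  calc ‖f z‖ = (‖f z‖ * Real.exp (-(τ+ε) * z.im)) * Real.exp ((τ+ε) * z.im) := by
        rw [mul_assoc, ← Real.exp_add, hzero, Real.exp_zero, mul_one]
    _ ≤ M * Real.exp ((τ+ε) * z.im) := by
        apply mul_le_mul_of_nonneg_right this (Real.exp_pos _).le

section PL
variable (f : ℂ → ℂ) (τ M : ℝ)

lemma pl_upper_eps' (hτ : 0 ≤ τ) {ε : ℝ} (hε : 0 < ε)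
    (hd : Differentiable ℂ f)
    (C : ℝ) (hC : ∀ z : ℂ, ‖f z‖ ≤ C * Real.exp ((τ + ε) * ‖z‖))
    (hreal : ∀ t : ℝ, ‖f t‖ ≤ M) :
    ∀ z : ℂ, 0 ≤ z.im → ‖f z‖ ≤ M * Real.exp ((τ + ε) * z.im) :=
  pl_upper_eps0 f τ M ε hτ hε (le_trans (norm_nonneg (f 0)) (hreal 0)) hd C hC hreal

lemma pl_upper (hτ : 0 ≤ τ) (hM : 0 ≤ M)
    (hd : Differentiable ℂ f)
    (htype : ∀ ε > 0, ∃ C : ℝ, ∀ z : ℂ, ‖f z‖ ≤ C * Real.exp ((τ + ε) * ‖z‖))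
    (hreal : ∀ t : ℝ, ‖f t‖ ≤ M) :
    ∀ z : ℂ, 0 ≤ z.im → ‖f z‖ ≤ M * Real.exp (τ * z.im) := by
  intro z hz
  have hev : ∀ᶠ ε : ℝ in 𝓝[>] 0, ‖f z‖ ≤ M * Real.exp ((τ + ε) * z.im) := by
    filter_upwards [self_mem_nhdsWithin] with ε hε
    obtain ⟨C, hC⟩ := htype ε hε
    exact pl_upper_eps' f τ M hτ hε hd C hC hreal z hz
  have htend : Tendsto (fun ε : ℝ => M * Real.exp ((τ + ε) * z.im)) (𝓝[>] 0)
      (𝓝 (M * Real.exp (τ * z.im))) := by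
    have hcont : ContinuousAt (fun ε : ℝ => M * Real.exp ((τ + ε) * z.im)) 0 := by fun_prop
    have h2 : Tendsto (fun ε : ℝ => M * Real.exp ((τ + ε) * z.im)) (𝓝[>] 0)
        (𝓝 (M * Real.exp ((τ + 0) * z.im))) :=
      hcont.tendsto.mono_left (nhdsWithin_le_nhds)
    simpa using h2
  exact ge_of_tendsto htend hev

lemma pl_pointwise (hτ : 0 ≤ τ) (hM : 0 ≤ M)
    (hd : Differentiable ℂ f)
    (htype : ∀ ε > 0, ∃ C : ℝ, ∀ z : ℂ, ‖f z‖ ≤ C * Real.exp ((τ + ε) * ‖z‖))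
    (hreal : ∀ t : ℝ, ‖f t‖ ≤ M) :
    ∀ z : ℂ, ‖f z‖ ≤ M * Real.exp (τ * |z.im|) := by
  intro z
  rcases le_or_gt 0 z.im with hz | hz
  · rw [_root_.abs_of_nonneg hz]
    exact pl_upper f τ M hτ hM hd htype hreal z hz
  · set F : ℂ → ℂ := fun w => (starRingEnd ℂ) (f ((starRingEnd ℂ) w)) with hF
    have hFd : Differentiable ℂ F := differentiable_reflect f hd
    have hFtype : ∀ ε > 0, ∃ C : ℝ, ∀ w : ℂ, ‖F w‖ ≤ C * Real.exp ((τ + ε) * ‖w‖) := by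
      intro ε hε
      obtain ⟨C, hC⟩ := htype ε hε
      refine ⟨C, fun w => ?_⟩
      have : ‖F w‖ = ‖f ((starRingEnd ℂ) w)‖ := by rw [hF]; simp
      rw [this]
      simpa using hC ((starRingEnd ℂ) w)
    have hFreal : ∀ t : ℝ, ‖F t‖ ≤ M := by
      intro t
      have : ‖F (t:ℂ)‖ = ‖f t‖ := by rw [hF]; simp [Complex.conj_ofReal]
      rw [this]; exact hreal t
    have hw : 0 ≤ ((starRingEnd ℂ) z).im := by simp; linarith
    have := pl_upper F τ M hτ hM hFd hFtype hFreal _ hw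
    have hFz : ‖F ((starRingEnd ℂ) z)‖ = ‖f z‖ := by rw [hF]; simp
    rw [hFz] at this
    rw [_root_.abs_of_neg hz]
    simpa using this
end PL

lemma cont_forall_le {u : ℝ → ℂ} (hu : Continuous u) {M : ℝ}
    (h : ∀ᵐ t : ℝ, ‖u t‖ ≤ M) : ∀ t, ‖u t‖ ≤ M := by
  by_contra hcon
  push_neg at hcon
  obtain ⟨t, ht⟩ := hcon
  have hO : IsOpen {s : ℝ | M < ‖u s‖} := isOpen_lt continuous_const hu.norm
  have hpos : 0 < volume {s : ℝ | M < ‖u s‖} := hO.measure_pos volume ⟨t, ht⟩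
  rw [ae_iff] at h
  have : volume {s : ℝ | M < ‖u s‖} = 0 := by
    refine measure_mono_null (fun s hs => ?_) h
    exact not_le.mpr hs
  exact hpos.ne' this


lemma key_bound (f : ℂ → ℂ) (τ : ℝ) (hτ : 0 ≤ τ) (hf : Differentiable ℂ f)
    (htype : ∀ ε > 0, ∃ C : ℝ, ∀ z : ℂ, ‖f z‖ ≤ C * Real.exp ((τ + ε) * ‖z‖))
    (P : ℝ) (hP1 : 1 ≤ P) (c : ℝ) (n : ℕ)
    (NN : ENNReal) (hNNdef : NN = ∫⁻ t : ℝ, (‖f (t : ℂ)‖₊ : ENNReal) ^ P)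
    (hNNtop : NN ≠ ⊤) :
    (∫⁻ t : ℝ in Icc (-(n:ℝ)) n, (‖f ((t:ℂ) + Complex.I * c)‖₊ : ENNReal) ^ P)
      ≤ (ENNReal.ofReal (Real.exp (τ * |c|)) * NN ^ (1/P)) ^ P := by
  have hP0 : 0 < P := lt_of_lt_of_le one_pos hP1
  have hfc : Continuous f := hf.continuous
  set g : ℝ → ℂ := fun t => f ((t:ℂ) + Complex.I * c) with hgdef
  have hgc : Continuous g := hfc.comp (by fun_prop)
  set S : Set ℝ := Icc (-(n:ℝ)) n with hSdef
  set Ln : ENNReal := ∫⁻ t : ℝ in S, (‖g t‖₊ : ENNReal) ^ P with hLndef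
  -- boundedness of g on S
  obtain ⟨R, hR⟩ : ∃ R : ℝ, ∀ t ∈ S, ‖g t‖ ≤ R :=
    isCompact_Icc.exists_bound_of_continuousOn hgc.continuousOn
  have hR0 : 0 ≤ R := le_trans (norm_nonneg _) (hR 0 (by simp [hSdef]))
  have hLntop : Ln ≠ ⊤ := by
    have hb : ∀ t ∈ S, (‖g t‖₊ : ENNReal) ^ P ≤ ENNReal.ofReal (R ^ P) := by
      intro t ht
      have h1 : (‖g t‖₊ : ENNReal) ≤ ENNReal.ofReal R := by
        rw [← ofReal_norm_eq_coe_nnnorm]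
        exact ENNReal.ofReal_le_ofReal (hR t ht)
      calc (‖g t‖₊ : ENNReal) ^ P ≤ (ENNReal.ofReal R) ^ P := ENNReal.rpow_le_rpow h1 hP0.le
        _ = ENNReal.ofReal (R ^ P) := ENNReal.ofReal_rpow_of_nonneg hR0 hP0.le
    have hle : Ln ≤ ENNReal.ofReal (R ^ P) * volume S := by
      calc Ln ≤ ∫⁻ _t in S, ENNReal.ofReal (R ^ P) := setLIntegral_mono' measurableSet_Icc hb
        _ = ENNReal.ofReal (R ^ P) * volume S := setLIntegral_const _ _
    refine ne_top_of_le_ne_top ?_ hle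
    exact (ENNReal.mul_lt_top ENNReal.ofReal_lt_top measure_Icc_lt_top).ne
  -- the test function
  set ψ : ℝ → ℂ := fun t => ((‖g t‖ ^ (P - 2) : ℝ) : ℂ) * (starRingEnd ℂ) (g t) with hψdef
  have hψm : Measurable ψ := by
    apply Measurable.mul
    · exact Complex.measurable_ofReal.comp (hgc.measurable.norm.pow_const _)
    · exact (Complex.continuous_conj.comp hgc).measurable
  have hψnorm : ∀ t, ‖ψ t‖ ≤ ‖g t‖ ^ (P - 1) := by
    intro t
    by_cases hzero : g t = 0
    · rw [hψdef]
      simp only [hzero, map_zero, mul_zero, norm_zero]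
      exact Real.rpow_nonneg le_rfl _
    · have hpos : 0 < ‖g t‖ := norm_pos_iff.mpr hzero
      have heq : ‖ψ t‖ = ‖g t‖ ^ (P - 2) * ‖g t‖ := by
        rw [hψdef]
        simp only [norm_mul, Complex.norm_real]
        rw [Real.norm_eq_abs, _root_.abs_of_nonneg (Real.rpow_nonneg (norm_nonneg _) _)]
        congr 1
        simp [Complex.norm_conj]
      rw [heq, ← Real.rpow_add_one hpos.ne']
      have : P - 2 + 1 = P - 1 := by ring
      rw [this]
  have hψg : ∀ t, ψ t * g t = ((‖g t‖ ^ P : ℝ) : ℂ) := by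
    intro t
    by_cases hzero : g t = 0
    · rw [hψdef]
      simp [hzero, Real.zero_rpow hP0.ne']
    · have hpos : 0 < ‖g t‖ := norm_pos_iff.mpr hzero
      have hconj : (starRingEnd ℂ) (g t) * g t = ((‖g t‖ ^ 2 : ℝ) : ℂ) := by
        rw [mul_comm, Complex.mul_conj, Complex.normSq_eq_norm_sq]
      calc ψ t * g t = ((‖g t‖ ^ (P-2) : ℝ) : ℂ) * ((starRingEnd ℂ) (g t) * g t) := by
            rw [hψdef]; ring
        _ = ((‖g t‖ ^ (P-2) : ℝ) : ℂ) * ((‖g t‖ ^ 2 : ℝ) : ℂ) := by rw [hconj]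
        _ = ((‖g t‖ ^ P : ℝ) : ℂ) := by
            rw [← Complex.ofReal_mul]
            congr 1
            rw [← Real.rpow_natCast (‖g t‖) 2, ← Real.rpow_add hpos]
            norm_num
  have hψbd : ∀ t ∈ S, ‖ψ t‖ ≤ R ^ (P - 1) := by
    intro t ht
    refine (hψnorm t).trans ?_
    exact Real.rpow_le_rpow (norm_nonneg _) (hR t ht) (by linarith)
  -- the auxiliary entire function
  set h : ℂ → ℂ := fun z => ∫ t : ℝ in S, ψ t * f ((t:ℂ) + z) with hhdef
  have hinteg : ∀ z : ℂ, IntegrableOn (fun t : ℝ => ψ t * f ((t:ℂ) + z)) S := by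
    intro z
    obtain ⟨Cz, hCz⟩ : ∃ Cz : ℝ, ∀ t ∈ S, ‖f ((t:ℂ) + z)‖ ≤ Cz :=
      isCompact_Icc.exists_bound_of_continuousOn ((hfc.comp (by fun_prop)).continuousOn)
    refine ⟨(hψm.mul (hfc.comp
        (by fun_prop : Continuous fun t : ℝ => (t:ℂ) + z)).measurable).aestronglyMeasurable, ?_⟩
    refine HasFiniteIntegral.of_bounded (C := R ^ (P-1) * Cz) ?_
    rw [ae_restrict_iff' measurableSet_Icc]
    filter_upwards with t ht
    rw [norm_mul]
    exact mul_le_mul (hψbd t ht) (hCz t ht) (norm_nonneg _) (Real.rpow_nonneg hR0 _)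
  have hdf : Continuous (deriv f) := ((hf.contDiff (n := 1)).continuous_deriv le_rfl)
  have hh_diff : Differentiable ℂ h := by
    intro z₀
    obtain ⟨D, hD⟩ : ∃ D : ℝ, ∀ w ∈ (fun q : ℝ × ℂ => (q.1 : ℂ) + q.2) ''
        (S ×ˢ Metric.closedBall z₀ 1), ‖deriv f w‖ ≤ D := by
      apply IsCompact.exists_bound_of_continuousOn
      · exact (isCompact_Icc.prod (isCompact_closedBall _ _)).image (by fun_prop)
      · exact hdf.continuousOn
    have main := hasDerivAt_integral_of_dominated_loc_of_deriv_le
      (μ := volume.restrict S)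
      (F := fun z (t : ℝ) => ψ t * f ((t:ℂ) + z))
      (F' := fun z (t : ℝ) => ψ t * deriv f ((t:ℂ) + z))
      (x₀ := z₀) (bound := fun _ => R ^ (P-1) * D) (Metric.ball_mem_nhds z₀ one_pos)
      (Filter.Eventually.of_forall fun z => (hinteg z).aestronglyMeasurable)
      (hinteg z₀)
      ((hψm.mul (hdf.comp
        (by fun_prop : Continuous fun t : ℝ => (t:ℂ) + z₀)).measurable).aestronglyMeasurable)
      ?_ ?_ ?_
    · exact main.2.differentiableAt
    · rw [ae_restrict_iff' measurableSet_Icc]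
      filter_upwards with t ht
      intro z hz
      rw [norm_mul]
      refine mul_le_mul (hψbd t ht) (hD _ ?_) (norm_nonneg _) (Real.rpow_nonneg hR0 _)
      exact ⟨(t, z), ⟨ht, Metric.ball_subset_closedBall hz⟩, rfl⟩
    · exact integrableOn_const measure_Icc_lt_top.ne
    · filter_upwards with t
      intro z hz
      have h1 : HasDerivAt (fun w : ℂ => (t:ℂ) + w) 1 z := (hasDerivAt_id z).const_add _
      have h2 : HasDerivAt (fun w : ℂ => f ((t:ℂ) + w)) (deriv f ((t:ℂ) + z)) z := by
        have := ((hf ((t:ℂ) + z)).hasDerivAt).comp z h1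
        rw [mul_one] at this; exact this
      exact h2.const_mul (ψ t)
  have hh_type : ∀ ε > 0, ∃ C : ℝ, ∀ z : ℂ, ‖h z‖ ≤ C * Real.exp ((τ + ε) * ‖z‖) := by
    intro ε hε
    obtain ⟨C, hC⟩ := htype ε hε
    have hC0 : 0 ≤ C := by
      have h0 := hC 0
      simp only [norm_zero, mul_zero, Real.exp_zero, mul_one] at h0
      exact le_trans (norm_nonneg _) h0
    refine ⟨R ^ (P-1) * (C * Real.exp ((τ+ε) * n)) * (volume S).toReal, fun z => ?_⟩
    have hbd : ∀ t ∈ S, ‖ψ t * f ((t:ℂ) + z)‖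
        ≤ R ^ (P-1) * (C * Real.exp ((τ+ε) * n) * Real.exp ((τ+ε) * ‖z‖)) := by
      intro t ht
      rw [norm_mul]
      refine mul_le_mul (hψbd t ht) ?_ (norm_nonneg _) (Real.rpow_nonneg hR0 _)
      calc ‖f ((t:ℂ)+z)‖ ≤ C * Real.exp ((τ+ε) * ‖(t:ℂ)+z‖) := hC _
        _ ≤ C * Real.exp ((τ+ε) * (n + ‖z‖)) := by
            refine mul_le_mul_of_nonneg_left ?_ hC0
            refine Real.exp_le_exp.mpr ?_
            refine mul_le_mul_of_nonneg_left ?_ (by linarith)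
            calc ‖(t:ℂ)+z‖ ≤ ‖(t:ℂ)‖ + ‖z‖ := norm_add_le _ _
              _ ≤ n + ‖z‖ := by
                  refine add_le_add_left ?_ _
                  rw [Complex.norm_real, Real.norm_eq_abs]
                  exact abs_le.mpr ⟨ht.1, ht.2⟩
        _ = C * Real.exp ((τ+ε)*n) * Real.exp ((τ+ε)*‖z‖) := by
            rw [mul_assoc, ← Real.exp_add, mul_add]
    calc ‖h z‖ ≤ (R ^ (P-1) * (C * Real.exp ((τ+ε)*n) * Real.exp ((τ+ε)*‖z‖)))
          * (volume S).toReal :=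
          norm_setIntegral_le_of_norm_le_const measure_Icc_lt_top hbd
      _ = R ^ (P-1) * (C * Real.exp ((τ+ε)*n)) * (volume S).toReal
          * Real.exp ((τ+ε)*‖z‖) := by ring
  set Q : ℝ := 1 - 1/P with hQdef
  have hQ0 : 0 ≤ Q := by
    rw [hQdef]; simp only [sub_nonneg]
    rw [div_le_one hP0]; exact hP1
  set M₀ : ℝ := (Ln ^ Q * NN ^ (1/P)).toReal with hM₀def
  have hM₀top : Ln ^ Q * NN ^ (1/P) ≠ ⊤ := by
    apply ENNReal.mul_ne_top
    · exact ENNReal.rpow_ne_top_of_nonneg hQ0 hLntop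
    · exact ENNReal.rpow_ne_top_of_nonneg (by positivity) hNNtop
  have htrans : ∀ x : ℝ, (∫⁻ t : ℝ, (‖f ((t:ℂ) + (x:ℂ))‖₊ : ENNReal) ^ P) = NN := by
    intro x
    calc (∫⁻ t : ℝ, (‖f ((t:ℂ) + (x:ℂ))‖₊ : ENNReal) ^ P)
        = ∫⁻ t : ℝ, (fun s : ℝ => (‖f (s:ℂ)‖₊ : ENNReal) ^ P) (t + x) := by
          apply lintegral_congr
          intro t
          have : ((t:ℂ) + (x:ℂ)) = (((t + x : ℝ)) : ℂ) := by push_cast; ring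
          rw [this]
      _ = ∫⁻ s : ℝ, (‖f (s:ℂ)‖₊ : ENNReal) ^ P := by
          simpa using lintegral_add_right_eq_self (fun s : ℝ => (‖f (s:ℂ)‖₊ : ENNReal) ^ P) x
      _ = NN := hNNdef.symm
  have hψP : ∀ t, (‖ψ t‖₊ : ENNReal) ≤ ((‖g t‖₊ : ENNReal)) ^ (P-1) := by
    intro t
    calc (‖ψ t‖₊ : ENNReal) = ENNReal.ofReal ‖ψ t‖ := (ofReal_norm_eq_coe_nnnorm _).symm
      _ ≤ ENNReal.ofReal (‖g t‖ ^ (P-1)) := ENNReal.ofReal_le_ofReal (hψnorm t)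
      _ = (ENNReal.ofReal ‖g t‖) ^ (P-1) :=
          (ENNReal.ofReal_rpow_of_nonneg (norm_nonneg _) (by linarith)).symm
      _ = ((‖g t‖₊ : ENNReal)) ^ (P-1) := by rw [ofReal_norm_eq_coe_nnnorm]
  have hh_real : ∀ x : ℝ, ‖h (x : ℂ)‖ ≤ M₀ := by
    intro x
    have hmeas2 : Measurable fun t : ℝ => (‖f ((t:ℂ) + (x:ℂ))‖₊ : ENNReal) :=
      (hfc.comp (by fun_prop : Continuous fun t : ℝ => (t:ℂ) + (x:ℂ))).measurable.nnnorm.coe_nnreal_ennreal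
    have step1 : ‖h (x:ℂ)‖
        ≤ (∫⁻ t in S, (‖ψ t‖₊ : ENNReal) * (‖f ((t:ℂ) + (x:ℂ))‖₊ : ENNReal)).toReal := by
      rw [hhdef]
      refine le_trans (norm_integral_le_lintegral_norm _) ?_
      apply le_of_eq
      congr 1
      apply lintegral_congr
      intro t
      rw [norm_mul, ENNReal.ofReal_mul (norm_nonneg _), ofReal_norm_eq_coe_nnnorm,
        ofReal_norm_eq_coe_nnnorm]
    have step2 : (∫⁻ t in S, (‖ψ t‖₊ : ENNReal) * (‖f ((t:ℂ) + (x:ℂ))‖₊ : ENNReal))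
        ≤ Ln ^ Q * NN ^ (1/P) := by
      rcases eq_or_lt_of_le hP1 with hPeq | hPlt
      · -- P = 1
        have hQ0' : Ln ^ Q * NN ^ (1/P) = NN := by
          rw [hQdef, ← hPeq]
          norm_num
        rw [hQ0']
        calc (∫⁻ t in S, (‖ψ t‖₊ : ENNReal) * (‖f ((t:ℂ) + (x:ℂ))‖₊ : ENNReal))
            ≤ ∫⁻ t in S, 1 * (‖f ((t:ℂ) + (x:ℂ))‖₊ : ENNReal) := by
              refine setLIntegral_mono' measurableSet_Icc fun t _ => ?_
              refine mul_le_mul' ?_ le_rfl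
              have := hψP t
              rw [← hPeq] at this
              simpa using this
          _ = ∫⁻ t in S, (‖f ((t:ℂ) + (x:ℂ))‖₊ : ENNReal) := by simp
          _ ≤ ∫⁻ t : ℝ, (‖f ((t:ℂ) + (x:ℂ))‖₊ : ENNReal) := setLIntegral_le_lintegral _ _
          _ = ∫⁻ t : ℝ, (‖f ((t:ℂ) + (x:ℂ))‖₊ : ENNReal) ^ P := by
              apply lintegral_congr
              intro t
              rw [← hPeq, ENNReal.rpow_one]
          _ = NN := htrans x
      · -- 1 < P
        set q : ℝ := P / (P - 1) with hqdef
        have hpq : q.HolderConjugate P := (Real.HolderConjugate.conjExponent hPlt).symm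
        have hq0 : 0 < q := hpq.pos
        have hq_inv : 1/q = Q := by
          rw [hQdef, hqdef]
          field_simp
        have hHolder := ENNReal.lintegral_mul_le_Lp_mul_Lq (volume.restrict S) hpq
          (hψm.nnnorm.coe_nnreal_ennreal.aemeasurable) (hmeas2.aemeasurable)
        refine le_trans hHolder ?_
        refine mul_le_mul' ?_ ?_
        · -- (∫⁻ ψ^q)^(1/q) ≤ Ln^Q
          have hpt : ∀ t, (‖ψ t‖₊ : ENNReal) ^ q ≤ (‖g t‖₊ : ENNReal) ^ P := by
            intro t
            calc (‖ψ t‖₊ : ENNReal) ^ q ≤ ((‖g t‖₊ : ENNReal) ^ (P-1)) ^ q :=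
                  ENNReal.rpow_le_rpow (hψP t) hq0.le
              _ = (‖g t‖₊ : ENNReal) ^ ((P-1) * q) := by rw [← ENNReal.rpow_mul]
              _ = (‖g t‖₊ : ENNReal) ^ P := by
                  congr 1
                  rw [hqdef]
                  field_simp
          calc (∫⁻ t in S, (‖ψ t‖₊ : ENNReal) ^ q) ^ (1/q)
              ≤ (∫⁻ t in S, (‖g t‖₊ : ENNReal) ^ P) ^ (1/q) := by
                refine ENNReal.rpow_le_rpow ?_ (by positivity)
                exact setLIntegral_mono' measurableSet_Icc fun t _ => hpt t
            _ = Ln ^ Q := by rw [hLndef, hq_inv]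
        · -- (∫⁻ f^P)^(1/P) ≤ NN^(1/P)
          refine ENNReal.rpow_le_rpow ?_ (by positivity)
          refine le_trans (setLIntegral_le_lintegral _ _) ?_
          rw [htrans x]
    calc ‖h (x:ℂ)‖ ≤ _ := step1
      _ ≤ M₀ := by
          rw [hM₀def]
          exact ENNReal.toReal_mono hM₀top step2
  -- Phragmen-Lindelof
  have hpt := pl_pointwise h τ M₀ hτ ENNReal.toReal_nonneg hh_diff hh_type hh_real
  have hhc : ‖h (Complex.I * c)‖ ≤ M₀ * Real.exp (τ * |c|) := by
    have := hpt (Complex.I * c)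
    simpa using this
  have hval : ‖h (Complex.I * c)‖ = Ln.toReal := by
    have h1 : h (Complex.I * c) = ∫ t in S, ((‖g t‖ ^ P : ℝ) : ℂ) := by
      rw [hhdef]
      have heq : (fun t : ℝ => ψ t * f ((t:ℂ) + Complex.I * c))
          = fun t : ℝ => ((‖g t‖ ^ P : ℝ) : ℂ) := funext fun t => hψg t
      exact congrArg _ heq
    have h2 : (∫ t in S, ((‖g t‖ ^ P : ℝ) : ℂ)) = (((∫ t in S, ‖g t‖ ^ P) : ℝ) : ℂ) := by
      exact integral_ofReal
    rw [h1, h2, Complex.norm_real, Real.norm_eq_abs]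
    have hnn : 0 ≤ ∫ t in S, ‖g t‖ ^ P :=
      integral_nonneg fun t => Real.rpow_nonneg (norm_nonneg _) _
    rw [_root_.abs_of_nonneg hnn]
    rw [integral_eq_lintegral_of_nonneg_ae
      (Filter.Eventually.of_forall fun t => Real.rpow_nonneg (norm_nonneg _) _)
      ((hgc.norm.measurable.pow_const _).aestronglyMeasurable)]
    congr 1
    rw [hLndef]
    apply lintegral_congr
    intro t
    rw [← ENNReal.ofReal_rpow_of_nonneg (norm_nonneg _) hP0.le, ofReal_norm_eq_coe_nnnorm]
  -- conclude
  rw [hval] at hhc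
  have hEN : Ln ≤ ENNReal.ofReal (Real.exp (τ * |c|)) * (Ln ^ Q * NN ^ (1/P)) := by
    calc Ln = ENNReal.ofReal Ln.toReal := (ENNReal.ofReal_toReal hLntop).symm
      _ ≤ ENNReal.ofReal (M₀ * Real.exp (τ * |c|)) := ENNReal.ofReal_le_ofReal hhc
      _ = ENNReal.ofReal (Real.exp (τ * |c|)) * ENNReal.ofReal M₀ := by
          rw [mul_comm, ENNReal.ofReal_mul (Real.exp_pos _).le]
      _ ≤ ENNReal.ofReal (Real.exp (τ * |c|)) * (Ln ^ Q * NN ^ (1/P)) := by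
          gcongr
          exact ENNReal.ofReal_toReal_le
  rcases eq_or_ne Ln 0 with hLn0 | hLn0
  · rw [hLn0]; exact zero_le
  · have hcancel : Ln ^ (1/P) ≤ ENNReal.ofReal (Real.exp (τ * |c|)) * NN ^ (1/P) := by
      have hsplit : Ln = Ln ^ Q * Ln ^ (1/P) := by
        rw [← ENNReal.rpow_add _ _ hLn0 hLntop]
        norm_num [hQdef]
      have hEN2 : Ln ^ Q * Ln ^ (1/P)
          ≤ Ln ^ Q * (ENNReal.ofReal (Real.exp (τ * |c|)) * NN ^ (1/P)) := by
        calc Ln ^ Q * Ln ^ (1/P) = Ln := hsplit.symm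
          _ ≤ ENNReal.ofReal (Real.exp (τ * |c|)) * (Ln ^ Q * NN ^ (1/P)) := hEN
          _ = Ln ^ Q * (ENNReal.ofReal (Real.exp (τ * |c|)) * NN ^ (1/P)) := by ring
      have h0 : Ln ^ Q ≠ 0 := by
        intro hz
        rw [ENNReal.rpow_eq_zero_iff] at hz
        rcases hz with ⟨h1, _⟩ | ⟨h1, _⟩
        · exact hLn0 h1
        · exact hLntop h1
      have htop : Ln ^ Q ≠ ⊤ := ENNReal.rpow_ne_top_of_nonneg hQ0 hLntop
      exact (ENNReal.mul_le_mul_iff_right h0 htop).mp hEN2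
    calc Ln = (Ln ^ (1/P)) ^ P := by
          rw [← ENNReal.rpow_mul, one_div, inv_mul_cancel₀ hP0.ne', ENNReal.rpow_one]
      _ ≤ (ENNReal.ofReal (Real.exp (τ * |c|)) * NN ^ (1/P)) ^ P :=
          ENNReal.rpow_le_rpow hcancel hP0.le

/-- **Plancherel–Polya inequality.** If `f` is entire of exponential type at most `π b`
and its restriction to the real line is in `L^p`, then the shift `t ↦ f (t + I*c)`
satisfies `‖f (· + I*c)‖_p ≤ exp (π b |c|) ‖f‖_p`. -/
theorem plancherel_polya (f : ℂ → ℂ) (b : ℝ) (hb : 0 < b)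
    (hf : Differentiable ℂ f)
    (htype : ∀ ε > 0, ∃ C : ℝ, ∀ z : ℂ, ‖f z‖ ≤ C * Real.exp ((π * b + ε) * ‖z‖))
    (p : ENNReal) (hp : 1 ≤ p)
    (hLp : MeasureTheory.MemLp (fun t : ℝ => f t) p volume)
    (c : ℝ) :
    eLpNorm (fun t : ℝ => f (t + Complex.I * c)) p volume ≤
      ENNReal.ofReal (Real.exp (π * b * |c|)) * eLpNorm (fun t : ℝ => f t) p volume := by
  have hπb : 0 ≤ π * b := by positivity
  have htype' : ∀ ε > 0, ∃ C : ℝ, ∀ z : ℂ, ‖f z‖ ≤ C * Real.exp ((π * b + ε) * ‖z‖) := htype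
  have hfc : Continuous f := hf.continuous
  have hgc : Continuous (fun t : ℝ => f (t + Complex.I * c)) := by
    apply hfc.comp; fun_prop
  have him : ∀ t : ℝ, |((t : ℂ) + Complex.I * c).im| = |c| := by
    intro t; simp
  by_cases hptop : p = ⊤
  · subst hptop
    rw [eLpNorm_exponent_top, eLpNorm_exponent_top]
    by_cases hfin : eLpNormEssSup (fun t : ℝ => f t) volume = ⊤
    · rw [hfin, ENNReal.mul_top (by simp [Real.exp_pos, (Real.exp_pos _).ne'])]
      exact le_top
    · set M := (eLpNormEssSup (fun t : ℝ => f t) volume).toReal with hMdef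
      have hMae : ∀ᵐ t : ℝ, ‖f t‖ ≤ M := by
        filter_upwards [ae_le_eLpNormEssSup (f := fun t : ℝ => f t) (μ := volume)] with t ht
        have h2 := ENNReal.toReal_mono hfin ht
        simpa using h2
      have hreal : ∀ t : ℝ, ‖f t‖ ≤ M :=
        cont_forall_le (by exact hfc.comp Complex.continuous_ofReal) hMae
      have hM : 0 ≤ M := ENNReal.toReal_nonneg
      have hpt := pl_pointwise f (π * b) M hπb hM hf htype' hreal
      have hbd : ∀ t : ℝ, ‖f ((t : ℂ) + Complex.I * c)‖ ≤ M * Real.exp (π * b * |c|) := by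
        intro t
        have := hpt ((t : ℂ) + Complex.I * c)
        rwa [him t] at this
      calc eLpNormEssSup (fun t : ℝ => f (t + Complex.I * c)) volume
          ≤ ENNReal.ofReal (M * Real.exp (π * b * |c|)) :=
            eLpNormEssSup_le_of_ae_bound (Filter.Eventually.of_forall hbd)
        _ = ENNReal.ofReal (Real.exp (π * b * |c|)) * ENNReal.ofReal M := by
            rw [mul_comm, ENNReal.ofReal_mul (Real.exp_pos _).le]
        _ = ENNReal.ofReal (Real.exp (π * b * |c|)) *
              eLpNormEssSup (fun t : ℝ => f t) volume := by
            rw [hMdef, ENNReal.ofReal_toReal hfin]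
  · -- p < ∞
    have hp0 : p ≠ 0 := by
      intro h0
      rw [h0] at hp
      exact absurd hp (by simp)
    set P : ℝ := p.toReal with hPdef
    have hP1 : 1 ≤ P := by
      have := ENNReal.toReal_mono hptop hp
      simpa using this
    have hP0 : 0 < P := lt_of_lt_of_le one_pos hP1
    set NN : ENNReal := ∫⁻ t : ℝ, (‖f (t:ℂ)‖₊ : ENNReal) ^ P with hNNdef
    have hNf : eLpNorm (fun t : ℝ => f t) p volume = NN ^ (1/P) := by
      rw [eLpNorm_eq_lintegral_rpow_enorm_toReal hp0 hptop]
      rfl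
    have hNNtop : NN ≠ ⊤ := by
      have hlt := hLp.2
      rw [hNf] at hlt
      intro hNN
      rw [hNN] at hlt
      rw [ENNReal.top_rpow_of_pos (by positivity : (0:ℝ) < 1/P)] at hlt
      exact absurd hlt (by simp)
    have hkey := fun n : ℕ => key_bound f (π*b) hπb hf htype' P hP1 c n NN hNNdef hNNtop
    have hglobal : (∫⁻ t : ℝ, (‖f ((t:ℂ) + Complex.I * c)‖₊ : ENNReal) ^ P)
        ≤ (ENNReal.ofReal (Real.exp (π*b*|c|)) * NN ^ (1/P)) ^ P := by
      have hmeas : AEMeasurable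
          (fun t : ℝ => (‖f ((t:ℂ) + Complex.I * c)‖₊ : ENNReal) ^ P) (volume) := by
        apply Measurable.aemeasurable
        exact (hgc.measurable.nnnorm.coe_nnreal_ennreal).pow_const _
      have hcover : AECover (volume : Measure ℝ) atTop (fun n : ℕ => Icc (-(n:ℝ)) n) := by
        apply aecover_Icc
        · exact tendsto_neg_atBot_iff.mpr tendsto_natCast_atTop_atTop
        · exact tendsto_natCast_atTop_atTop
      have hlim := hcover.lintegral_tendsto_of_countably_generated hmeas
      exact le_of_tendsto hlim (Filter.Eventually.of_forall hkey)
    rw [eLpNorm_eq_lintegral_rpow_enorm_toReal hp0 hptop, hNf]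
    calc (∫⁻ t : ℝ, (‖f ((t:ℂ) + Complex.I * c)‖₊ : ENNReal) ^ P) ^ (1/P)
        ≤ ((ENNReal.ofReal (Real.exp (π*b*|c|)) * NN ^ (1/P)) ^ P) ^ (1/P) :=
          ENNReal.rpow_le_rpow hglobal (by positivity)
      _ = ENNReal.ofReal (Real.exp (π*b*|c|)) * NN ^ (1/P) := by
          rw [← ENNReal.rpow_mul, mul_one_div, div_self hP0.ne', ENNReal.rpow_one]
end

section
/- Let P(w,t) = (1/π) · v/((u−t)² + v²) be the Poisson kernel for w = u+iv, v > 0. For any measurable h : ℝ → ℂ with ∫ |h(s)|/(s²+1) ds < ∞ and any r > 0, (1/(2r)) ∫_{−r}^{r} (P(t+i,·) ⋆ h)(t) dt satisfies: (1/(2r)) ∫_{−r}^{r} ∫_{−∞}^{∞} |h(s)| P(t+i,s) ds dt ≤ (1/(2r)) ∫_{−2r}^{2r} |h(s)| ds + 2 ∫_{|s|>2r} |h(s)|/(s²+1) ds. -/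
open MeasureTheory Real

set_option maxHeartbeats 1000000 in
/-- Poisson-averaging estimate at height 1: the average over `t ∈ [-r,r]` of the
Poisson integral of `|h|` is bounded by the average of `|h|` over `[-2r,2r]` plus a
tail term. Here `P(t+i, s) = (1/π) / ((t-s)^2 + 1)`. -/
theorem poisson_average_estimate
    (h : ℝ → ℂ) (hmeas : Measurable h)
    (hint : Integrable (fun s : ℝ => ‖h s‖ / (s ^ 2 + 1))) :
    ∀ r : ℝ, 0 < r →
      (1 / (2 * r)) * ∫ t in (-r)..r, ∫ s : ℝ, ‖h s‖ * ((1 / π) * (1 / ((t - s) ^ 2 + 1))) ≤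
        (1 / (2 * r)) * (∫ s in (-(2 * r))..(2 * r), ‖h s‖) +
          2 * ∫ s in {s : ℝ | 2 * r < |s|}, ‖h s‖ / (s ^ 2 + 1) := by
  intro r hr
  have hπ : (0:ℝ) < π := Real.pi_pos
  have hπ3 : (3:ℝ) < π := Real.pi_gt_three
  have hrr : -r ≤ r := by linarith
  set g : ℝ → ℝ := fun s => ‖h s‖ with hgdef
  have hgnn : ∀ s, 0 ≤ g s := fun s => norm_nonneg _
  have hgmeas : Measurable g := hmeas.norm
  set K : ℝ → ℝ → ℝ := fun t s => (1 / π) * (1 / ((t - s) ^ 2 + 1)) with hKdef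
  have hKnn : ∀ t s, 0 ≤ K t s := by
    intro t s; positivity
  have hKcont : Continuous (fun p : ℝ × ℝ => K p.1 p.2) := by
    apply continuous_const.mul
    apply Continuous.div continuous_const
    · exact ((continuous_fst.sub continuous_snd).pow 2).add continuous_const
    · intro p; positivity
  -- integrability of the kernel in t, and its total mass 1
  have hKint_t : ∀ s : ℝ, Integrable (fun t : ℝ => K t s) := by
    intro s
    have h2 : Integrable (fun t : ℝ => (1 + (t - s)^2)⁻¹) :=
      integrable_inv_one_add_sq.comp_sub_right s
    have h3 := h2.const_mul (1/π)
    apply h3.congr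
    filter_upwards with t
    show (1:ℝ)/π * (1 + (t - s)^2)⁻¹ = (1:ℝ)/π * (1 / ((t - s)^2 + 1))
    rw [one_div ((t-s)^2+1), add_comm ((t-s)^2) 1]
  have hKtot : ∀ s : ℝ, ∫ t : ℝ, K t s = 1 := by
    intro s
    rw [hKdef]
    simp only
    rw [integral_const_mul]
    have h2 : ∫ t : ℝ, (1 + (t - s)^2)⁻¹ = π := by
      rw [integral_sub_right_eq_self (fun x : ℝ => (1 + x^2)⁻¹) s]
      exact integral_univ_inv_one_add_sq
    have h3 : ∫ t : ℝ, 1 / ((t - s)^2 + 1) = π := by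
      rw [← h2]
      congr 1; funext t; rw [one_div, add_comm]
    rw [h3]; field_simp
  -- integrability in s for |t| ≤ r
  have hbound : ∀ t s : ℝ, |t| ≤ r →
      g s * K t s ≤ (2 * (r^2+1) / π) * (g s / (s^2+1)) := by
    intro t s ht
    have h1 : (0:ℝ) < (t-s)^2+1 := by positivity
    have h2 : (0:ℝ) < s^2+1 := by positivity
    have ht2 : t^2 ≤ r^2 := by
      have := abs_le.1 ht
      nlinarith [this.1, this.2]
    have hkey : s^2+1 ≤ 2*(r^2+1)*((t-s)^2+1) := by
      nlinarith [sq_nonneg (t-s), sq_nonneg t, sq_nonneg (t*(t-s)), sq_nonneg (t*(t-s)+1)]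
    have hK1 : K t s ≤ (2*(r^2+1)/π) * (1/(s^2+1)) := by
      show (1:ℝ)/π * (1/((t - s)^2+1)) ≤ (2*(r^2+1)/π) * (1/(s^2+1))
      rw [div_mul_div_comm, div_mul_div_comm, one_mul, mul_one]
      rw [div_le_div_iff₀ (by positivity) (by positivity)]
      nlinarith [hkey, h1, h2, hπ]
    calc g s * K t s ≤ g s * ((2*(r^2+1)/π) * (1/(s^2+1))) :=
          mul_le_mul_of_nonneg_left hK1 (hgnn s)
      _ = (2*(r^2+1)/π) * (g s/(s^2+1)) := by ring
  have hInt_s : ∀ t : ℝ, |t| ≤ r → Integrable (fun s => g s * K t s) := by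
    intro t ht
    apply (hint.const_mul (2*(r^2+1)/π)).mono'
    · exact (hgmeas.mul ((hKcont.comp (Continuous.prodMk_right t)).measurable)).aestronglyMeasurable
    · filter_upwards with s
      rw [Real.norm_of_nonneg (mul_nonneg (hgnn s) (hKnn t s))]
      exact hbound t s ht
  -- product integrability on Ioc(-r,r) × ℝ
  haveI : IsFiniteMeasure (volume.restrict (Set.Ioc (-r) r)) :=
    ⟨by rw [Measure.restrict_apply_univ]; exact measure_Ioc_lt_top⟩
  have hFmeas : AEStronglyMeasurable (fun p : ℝ × ℝ => g p.2 * K p.1 p.2)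
      ((volume.restrict (Set.Ioc (-r) r)).prod volume) :=
    ((hgmeas.comp measurable_snd).mul hKcont.measurable).aestronglyMeasurable
  have hC0 : ∀ t : ℝ, |t| ≤ r →
      ∫ s, g s * K t s ≤ (2*(r^2+1)/π) * ∫ s, g s / (s^2+1) := by
    intro t ht
    rw [← integral_const_mul]
    apply integral_mono_of_nonneg
    · filter_upwards with s; exact mul_nonneg (hgnn s) (hKnn t s)
    · exact hint.const_mul _
    · filter_upwards with s; exact hbound t s ht
  have hFprod : Integrable (fun p : ℝ × ℝ => g p.2 * K p.1 p.2)
      ((volume.restrict (Set.Ioc (-r) r)).prod volume) := by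
    rw [integrable_prod_iff hFmeas]
    constructor
    · filter_upwards [ae_restrict_mem measurableSet_Ioc] with t ht
      exact hInt_s t (abs_le.2 ⟨le_of_lt ht.1, ht.2⟩)
    · apply Integrable.mono' (g := fun _ => (2*(r^2+1)/π) * ∫ s, g s / (s^2+1))
        (integrable_const _)
      · exact hFmeas.norm.integral_prod_right'
      · filter_upwards [ae_restrict_mem measurableSet_Ioc] with t ht
        have habs : |t| ≤ r := abs_le.2 ⟨le_of_lt ht.1, ht.2⟩
        have h1 : ∫ s, ‖g s * K t s‖ = ∫ s, g s * K t s := by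
          congr 1; funext s
          exact Real.norm_of_nonneg (mul_nonneg (hgnn s) (hKnn t s))
        rw [Real.norm_of_nonneg]
        · rw [h1]; exact hC0 t habs
        · rw [h1]; exact integral_nonneg fun s => mul_nonneg (hgnn s) (hKnn t s)
  -- Fubini
  have hswap : ∫ t in Set.Ioc (-r) r, ∫ s, g s * K t s =
      ∫ s, ∫ t in Set.Ioc (-r) r, g s * K t s := by
    exact integral_integral_swap hFprod
  set I : ℝ → ℝ := fun s => ∫ t in Set.Ioc (-r) r, K t s with hIdef
  have hInn : ∀ s, ∫ t in Set.Ioc (-r) r, g s * K t s = g s * I s := by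
    intro s; rw [hIdef]; exact integral_const_mul _ _
  have hInn2 : ∫ s, ∫ t in Set.Ioc (-r) r, g s * K t s = ∫ s, g s * I s := by
    congr 1; funext s; exact hInn s
  have hInonneg : ∀ s, 0 ≤ I s :=
    fun s => setIntegral_nonneg measurableSet_Ioc fun t _ => hKnn t s
  have hIle1 : ∀ s, I s ≤ 1 := by
    intro s
    calc I s ≤ ∫ t : ℝ, K t s :=
          setIntegral_le_integral (hKint_t s) (Filter.Eventually.of_forall fun t => hKnn t s)
      _ = 1 := hKtot s
  -- tail bound
  have hItail : ∀ s : ℝ, 2*r < |s| → I s ≤ (2*r) * ((4/π) * (1/(s^2+1))) := by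
    intro s hs
    have hb : ∀ t ∈ Set.Ioc (-r) r, K t s ≤ (4/π) * (1/(s^2+1)) := by
      intro t ht
      have h1 : |t| ≤ r := abs_le.2 ⟨le_of_lt ht.1, ht.2⟩
      have h2 : |s| - |t| ≤ |t - s| := by
        have := abs_sub_abs_le_abs_sub s t
        rwa [abs_sub_comm s t] at this
      have h3 : (0:ℝ) < (t-s)^2+1 := by positivity
      have h4 : (0:ℝ) < s^2+1 := by positivity
      have h5 : |s|/2 < |t - s| := by
        have : |s| - |t| ≥ |s| - r := by linarith
        nlinarith
      have h6 : s^2 + 1 ≤ 4 * ((t-s)^2+1) := by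
        have hsq : (|s|/2)^2 ≤ |t-s|^2 := by
          apply sq_le_sq' <;> nlinarith [abs_nonneg s, abs_nonneg (t-s)]
        rw [sq_abs] at hsq
        nlinarith [sq_abs s]
      rw [hKdef]
      simp only
      rw [div_mul_div_comm, div_mul_div_comm, one_mul, mul_one]
      rw [div_le_div_iff₀ (by positivity) (by positivity)]
      nlinarith [hπ, h6, h3, h4]
    calc I s ≤ ∫ _ in Set.Ioc (-r) r, (4/π) * (1/(s^2+1)) := by
          apply setIntegral_mono_on (hKint_t s).integrableOn
            (integrable_const _) measurableSet_Ioc hb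
      _ = (2*r) * ((4/π) * (1/(s^2+1))) := by
          rw [setIntegral_const, smul_eq_mul, Real.volume_real_Ioc_of_le hrr]
          ring
  -- the dominating function
  have htailset : MeasurableSet {s : ℝ | 2*r < |s|} :=
    measurableSet_lt measurable_const measurable_abs
  set B : ℝ → ℝ := fun s =>
    Set.indicator (Set.Icc (-(2*r)) (2*r)) g s +
      (8*r/π) * Set.indicator {s : ℝ | 2*r < |s|} (fun s => g s / (s^2+1)) s with hBdef
  have hgI_le_B : ∀ s, g s * I s ≤ B s := by
    intro s
    rw [hBdef]
    simp only
    by_cases hcase : |s| ≤ 2*r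
    · have hmem : s ∈ Set.Icc (-(2*r)) (2*r) := by
        have := abs_le.1 hcase; exact ⟨this.1, this.2⟩
      have hnotmem : s ∉ {s : ℝ | 2*r < |s|} := by
        simp only [Set.mem_setOf_eq, not_lt]; exact hcase
      rw [Set.indicator_of_mem hmem, Set.indicator_of_notMem hnotmem]
      have : g s * I s ≤ g s * 1 := mul_le_mul_of_nonneg_left (hIle1 s) (hgnn s)
      simpa using this
    · push_neg at hcase
      have hnotmem : s ∉ Set.Icc (-(2*r)) (2*r) := by
        intro hmem
        exact absurd (abs_le.2 ⟨hmem.1, hmem.2⟩) (not_le.2 hcase)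
      have hmem : s ∈ {s : ℝ | 2*r < |s|} := hcase
      rw [Set.indicator_of_notMem hnotmem, Set.indicator_of_mem hmem, zero_add]
      calc g s * I s ≤ g s * ((2*r) * ((4/π) * (1/(s^2+1)))) :=
            mul_le_mul_of_nonneg_left (hItail s hcase) (hgnn s)
        _ = (8*r/π) * (g s / (s^2+1)) := by ring
  -- integrability of the two pieces of B
  have hgIcc : IntegrableOn g (Set.Icc (-(2*r)) (2*r)) := by
    apply Integrable.mono' ((hint.const_mul ((2*r)^2+1)).restrict)
    · exact hgmeas.aestronglyMeasurable
    · filter_upwards [ae_restrict_mem measurableSet_Icc] with s hs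
      have h2 : s^2 ≤ (2*r)^2 := sq_le_sq' (by linarith [hs.1]) hs.2
      have h3 : (0:ℝ) < s^2+1 := by positivity
      rw [Real.norm_of_nonneg (hgnn s)]
      calc g s = (s^2+1) * (g s/(s^2+1)) := by field_simp
        _ ≤ ((2*r)^2+1) * (g s/(s^2+1)) := by
            apply mul_le_mul_of_nonneg_right (by linarith) (by positivity)
  have hpiece1 : Integrable (fun s => Set.indicator (Set.Icc (-(2*r)) (2*r)) g s) :=
    hgIcc.integrable_indicator measurableSet_Icc
  have hpiece2 : Integrable (fun s =>
      (8*r/π) * Set.indicator {s : ℝ | 2*r < |s|} (fun s => g s / (s^2+1)) s) :=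
    ((hint.integrableOn.integrable_indicator htailset)).const_mul _
  have hBint : Integrable B := hpiece1.add hpiece2
  -- main inequality
  have hmain : ∫ s, g s * I s ≤ ∫ s, B s := by
    apply integral_mono_of_nonneg
    · filter_upwards with s; exact mul_nonneg (hgnn s) (hInonneg s)
    · exact hBint
    · filter_upwards with s; exact hgI_le_B s
  have hBval : ∫ s, B s =
      (∫ s in Set.Icc (-(2*r)) (2*r), g s) +
        (8*r/π) * ∫ s in {s : ℝ | 2*r < |s|}, g s / (s^2+1) := by
    rw [hBdef]
    rw [integral_add hpiece1 hpiece2]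
    rw [integral_indicator measurableSet_Icc]
    rw [integral_const_mul, integral_indicator htailset]
  -- convert interval integrals
  have hLHS : ∫ t in (-r)..r, ∫ s : ℝ, ‖h s‖ * ((1 / π) * (1 / ((t - s) ^ 2 + 1))) =
      ∫ s, g s * I s := by
    rw [intervalIntegral.integral_of_le hrr]
    rw [← hInn2, ← hswap]
  have hRHS1 : ∫ s in Set.Icc (-(2*r)) (2*r), g s = ∫ s in (-(2*r))..(2*r), g s := by
    rw [intervalIntegral.integral_of_le (by linarith : -(2*r) ≤ 2*r),
      MeasureTheory.integral_Icc_eq_integral_Ioc]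
  have hTnn : 0 ≤ ∫ s in {s : ℝ | 2*r < |s|}, g s / (s^2+1) :=
    setIntegral_nonneg htailset fun s _ => div_nonneg (hgnn s) (by positivity)
  rw [hLHS]
  have h1 : (1/(2*r)) * ∫ s, g s * I s ≤ (1/(2*r)) * ∫ s, B s := by
    apply mul_le_mul_of_nonneg_left hmain (by positivity)
  apply le_trans h1
  rw [hBval, hRHS1, mul_add]
  apply add_le_add_right
  have hT := hTnn
  set T := ∫ s in {s : ℝ | 2*r < |s|}, g s / (s^2+1) with hTdef
  have hr0 : r ≠ 0 := ne_of_gt hr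
  have hπ0 : π ≠ 0 := ne_of_gt hπ
  rw [← mul_assoc]
  have hc : (1/(2*r)) * (8*r/π) = 4/π := by
    rw [div_mul_div_comm, one_mul, div_eq_div_iff (by positivity) hπ0]
    ring
  rw [hc]
  have h4π : (4:ℝ)/π ≤ 2 := by
    rw [div_le_iff₀ hπ]; linarith
  calc (4/π) * T ≤ 2 * T := mul_le_mul_of_nonneg_right h4π hT
end

section
/- Let X = {x_k} ⊂ ℝ be separated with λ(X) = inf |x_{k+1}−x_k| > 0, and let z, x̃ ∈ ℝ with dist(z, X) ≥ λ(X)/2 and dist(x̃, X) ≥ λ(X)/2, z ≠ x̃. Then ∑_{k} |z − x̃| / (|z − x_k| |x̃ − x_k|) ≲ 1 + max(log|z − x̃|, 0), with implied constant depending only on λ(X) and sup_k|x_{k+1}−x_k|. -/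
open Real

/-! Auxiliary lemmas for the summation estimate. -/

private lemma tel_eq (M : ℕ) : ∀ T : ℕ, M ≤ T →
    ∑ n ∈ Finset.Icc (M + 1) T, (1 / ((n : ℝ) - 1) - 1 / (n : ℝ)) = 1 / (M : ℝ) - 1 / (T : ℝ) := by
  intro T hMT
  induction T, hMT using Nat.le_induction with
  | base =>
      rw [Finset.Icc_eq_empty (by omega)]
      simp
  | succ T hMT ih =>
      rw [Finset.sum_Icc_succ_top (by omega), ih]
      push_cast
      ring

private lemma tel_le {M : ℕ} (hM : 1 ≤ M) (T : ℕ) :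
    ∑ n ∈ Finset.Icc (M + 1) T, (1 / ((n : ℝ) - 1) - 1 / (n : ℝ)) ≤ 1 / (M : ℝ) := by
  rcases le_or_gt M T with h | h
  · rw [tel_eq M T h]
    have : (0 : ℝ) ≤ 1 / (T : ℝ) := by positivity
    linarith
  · rw [Finset.Icc_eq_empty (by omega)]
    simp only [Finset.sum_empty]
    positivity

/-- Key finite-sum estimate over ℕ : any finite sum of `min (1/n) (B/n²)` is at most
`2 + log (B+1)`. -/
private lemma lemA (B : ℝ) (hB : 0 ≤ B) (s : Finset ℕ) :
    ∑ n ∈ s, min (1 / (n : ℝ)) (B / (n : ℝ) ^ 2) ≤ 2 + Real.log (B + 1) := by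
  classical
  set M := max 1 ⌈B⌉₊ with hMdef
  have hM1 : 1 ≤ M := le_max_left _ _
  have hM0 : (0 : ℝ) < (M : ℝ) := by exact_mod_cast lt_of_lt_of_le one_pos hM1
  have hBM : B ≤ (M : ℝ) := by
    refine le_trans (Nat.le_ceil B) ?_
    exact_mod_cast Nat.le_max_right 1 ⌈B⌉₊
  have hMB : (M : ℝ) ≤ B + 1 := by
    have h1 : (1 : ℝ) ≤ B + 1 := by linarith
    have h2 : (⌈B⌉₊ : ℝ) ≤ B + 1 := (Nat.ceil_lt_add_one hB).le
    calc (M : ℝ) = max (1 : ℝ) (⌈B⌉₊ : ℝ) := by rw [hMdef]; push_cast [Nat.cast_max]; rfl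
      _ ≤ B + 1 := max_le h1 h2
  have step1 : ∑ n ∈ s, min (1 / (n : ℝ)) (B / (n : ℝ) ^ 2)
      ≤ ∑ n ∈ s, (if n ≤ M then 1 / (n : ℝ) else B / (n : ℝ) ^ 2) := by
    refine Finset.sum_le_sum fun n _ => ?_
    split
    · exact min_le_left _ _
    · exact min_le_right _ _
  have hsplit : ∑ n ∈ s, (if n ≤ M then 1 / (n : ℝ) else B / (n : ℝ) ^ 2)
      = ∑ n ∈ s.filter (fun n => n ≤ M), 1 / (n : ℝ)
        + ∑ n ∈ s.filter (fun n => ¬ n ≤ M), B / (n : ℝ) ^ 2 :=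
    Finset.sum_ite _ _
  -- first part: harmonic estimate
  have part1 : ∑ n ∈ s.filter (fun n => n ≤ M), 1 / (n : ℝ) ≤ 1 + Real.log (B + 1) := by
    have hsub : s.filter (fun n => n ≤ M) ⊆ Finset.Icc 0 M := by
      intro n hn
      rw [Finset.mem_filter] at hn
      simp [hn.2]
    have h1 : ∑ n ∈ s.filter (fun n => n ≤ M), 1 / (n : ℝ) ≤ ∑ n ∈ Finset.Icc 0 M, 1 / (n : ℝ) :=
      Finset.sum_le_sum_of_subset_of_nonneg hsub (fun n _ _ => by positivity)
    have h2 : ∑ n ∈ Finset.Icc 0 M, 1 / (n : ℝ) = ∑ n ∈ Finset.Icc 1 M, 1 / (n : ℝ) := by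
      have he : Finset.Icc 0 M = insert 0 (Finset.Icc 1 M) := by
        ext n
        simp only [Finset.mem_Icc, Finset.mem_insert]
        omega
      rw [he, Finset.sum_insert (by simp)]
      simp
    have h3 : ∑ n ∈ Finset.Icc 1 M, 1 / (n : ℝ) = (harmonic M : ℝ) := by
      rw [harmonic_eq_sum_Icc]
      push_cast
      simp [one_div]
    have h4 : (harmonic M : ℝ) ≤ 1 + Real.log M := harmonic_le_one_add_log M
    have h5 : Real.log (M : ℝ) ≤ Real.log (B + 1) := Real.log_le_log hM0 hMB
    calc ∑ n ∈ s.filter (fun n => n ≤ M), 1 / (n : ℝ)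
        ≤ ∑ n ∈ Finset.Icc 0 M, 1 / (n : ℝ) := h1
      _ = (harmonic M : ℝ) := by rw [h2, h3]
      _ ≤ 1 + Real.log M := h4
      _ ≤ 1 + Real.log (B + 1) := by linarith
  -- second part: telescoping estimate
  have part2 : ∑ n ∈ s.filter (fun n => ¬ n ≤ M), B / (n : ℝ) ^ 2 ≤ 1 := by
    set T := s.sup id with hT
    have hsub : s.filter (fun n => ¬ n ≤ M) ⊆ Finset.Icc (M + 1) T := by
      intro n hn
      rw [Finset.mem_filter] at hn
      rw [Finset.mem_Icc]
      refine ⟨by omega, ?_⟩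
      exact Finset.le_sup (f := id) hn.1
    have hpt : ∀ n ∈ s.filter (fun n => ¬ n ≤ M),
        B / (n : ℝ) ^ 2 ≤ B * (1 / ((n : ℝ) - 1) - 1 / (n : ℝ)) := by
      intro n hn
      rw [Finset.mem_filter] at hn
      have hn2 : 2 ≤ n := by omega
      have hn2' : (2 : ℝ) ≤ (n : ℝ) := by exact_mod_cast hn2
      have h1 : (0 : ℝ) < (n : ℝ) - 1 := by linarith
      have h0 : (0 : ℝ) < (n : ℝ) := by linarith
      have key : 1 / ((n : ℝ) - 1) - 1 / (n : ℝ) = 1 / (((n : ℝ) - 1) * n) := by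
        field_simp
        ring
      have key2 : 1 / (n : ℝ) ^ 2 ≤ 1 / (((n : ℝ) - 1) * n) := by
        apply one_div_le_one_div_of_le
        · positivity
        · nlinarith
      calc B / (n : ℝ) ^ 2 = B * (1 / (n : ℝ) ^ 2) := by ring
        _ ≤ B * (1 / (((n : ℝ) - 1) * n)) := mul_le_mul_of_nonneg_left key2 hB
        _ = B * (1 / ((n : ℝ) - 1) - 1 / (n : ℝ)) := by rw [key]
    have hnn : ∀ n ∈ Finset.Icc (M + 1) T, 0 ≤ 1 / ((n : ℝ) - 1) - 1 / (n : ℝ) := by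
      intro n hn
      rw [Finset.mem_Icc] at hn
      have hn2 : 2 ≤ n := by omega
      have hn2' : (2 : ℝ) ≤ (n : ℝ) := by exact_mod_cast hn2
      have h1 : (0 : ℝ) < (n : ℝ) - 1 := by linarith
      have h0 : (0 : ℝ) < (n : ℝ) := by linarith
      have : 1 / (n : ℝ) ≤ 1 / ((n : ℝ) - 1) := by
        apply one_div_le_one_div_of_le h1
        linarith
      linarith
    calc ∑ n ∈ s.filter (fun n => ¬ n ≤ M), B / (n : ℝ) ^ 2
        ≤ ∑ n ∈ s.filter (fun n => ¬ n ≤ M), B * (1 / ((n : ℝ) - 1) - 1 / (n : ℝ)) :=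
          Finset.sum_le_sum hpt
      _ = B * ∑ n ∈ s.filter (fun n => ¬ n ≤ M), (1 / ((n : ℝ) - 1) - 1 / (n : ℝ)) :=
          (Finset.mul_sum _ _ _).symm
      _ ≤ B * ∑ n ∈ Finset.Icc (M + 1) T, (1 / ((n : ℝ) - 1) - 1 / (n : ℝ)) := by
          apply mul_le_mul_of_nonneg_left _ hB
          exact Finset.sum_le_sum_of_subset_of_nonneg hsub (fun n hn _ => hnn n hn)
      _ ≤ B * (1 / (M : ℝ)) := mul_le_mul_of_nonneg_left (tel_le hM1 T) hB
      _ = B / (M : ℝ) := by rw [mul_one_div]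
      _ ≤ 1 := (div_le_one hM0).mpr hBM
  calc ∑ n ∈ s, min (1 / (n : ℝ)) (B / (n : ℝ) ^ 2)
      ≤ ∑ n ∈ s, (if n ≤ M then 1 / (n : ℝ) else B / (n : ℝ) ^ 2) := step1
    _ = _ := hsplit
    _ ≤ (1 + Real.log (B + 1)) + 1 := add_le_add part1 part2
    _ = 2 + Real.log (B + 1) := by ring

/-- Finite sums over ℤ of `min (1/u k) (R/(u k)²)` for `u k ≥ c·max(1,|k-m|)`. -/
private lemma lemB {c R : ℝ} (hc : 0 < c) (hR : 0 ≤ R) (m : ℤ) (u : ℤ → ℝ)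
    (hu : ∀ k : ℤ, c * max 1 |(k : ℝ) - (m : ℝ)| ≤ u k) (s : Finset ℤ) :
    ∑ k ∈ s, min (1 / u k) (R / (u k) ^ 2) ≤ 3 / c * (2 + Real.log (R / c + 1)) := by
  classical
  set φ : ℤ → ℕ := fun k => max 1 (k - m).natAbs with hφ
  set G : ℕ → ℝ := fun n => min (1 / (n : ℝ)) ((R / c) / (n : ℝ) ^ 2) with hG
  have hGnonneg : ∀ n, 0 ≤ G n := fun n => le_min (by positivity) (by positivity)
  have hcast : ∀ k : ℤ, ((φ k : ℕ) : ℝ) = max 1 |(k : ℝ) - (m : ℝ)| := by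
    intro k
    have h1 : (((k - m).natAbs : ℕ) : ℝ) = |(k : ℝ) - (m : ℝ)| := by
      rw [Nat.cast_natAbs]
      push_cast
      ring_nf
    rw [hφ]
    push_cast [Nat.cast_max]
    rw [h1]
  have hpt : ∀ k ∈ s, min (1 / u k) (R / (u k) ^ 2) ≤ (1 / c) * G (φ k) := by
    intro k _
    have hn1 : (1 : ℝ) ≤ ((φ k : ℕ) : ℝ) := by rw [hcast]; exact le_max_left _ _
    have hn0 : (0 : ℝ) < ((φ k : ℕ) : ℝ) := lt_of_lt_of_le one_pos hn1
    have hcn : (0 : ℝ) < c * ((φ k : ℕ) : ℝ) := by positivity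
    have huk : c * ((φ k : ℕ) : ℝ) ≤ u k := by rw [hcast]; exact hu k
    have hu0 : (0 : ℝ) < u k := lt_of_lt_of_le hcn huk
    have step : min (1 / u k) (R / (u k) ^ 2)
        ≤ min (1 / (c * ((φ k : ℕ) : ℝ))) (R / (c * ((φ k : ℕ) : ℝ)) ^ 2) := by
      apply min_le_min
      · exact one_div_le_one_div_of_le hcn huk
      · apply div_le_div_of_nonneg_left hR (by positivity)
        nlinarith
    have e1 : 1 / (c * ((φ k : ℕ) : ℝ)) = (1 / c) * (1 / ((φ k : ℕ) : ℝ)) := by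
      ring
    have e2 : R / (c * ((φ k : ℕ) : ℝ)) ^ 2 = (1 / c) * ((R / c) / ((φ k : ℕ) : ℝ) ^ 2) := by
      ring
    have e3 : min (1 / (c * ((φ k : ℕ) : ℝ))) (R / (c * ((φ k : ℕ) : ℝ)) ^ 2)
        = (1 / c) * G (φ k) := by
      rw [e1, e2, hG]
      exact ((monotone_mul_left_of_nonneg (by positivity : (0:ℝ) ≤ 1 / c)).map_min).symm
    rw [← e3]
    exact step
  have cardbound : ∀ n : ℕ, ((s.filter (fun k => φ k = n)).card : ℝ) ≤ 3 := by
    intro n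
    have hsub : s.filter (fun k => φ k = n) ⊆ ({m - (n : ℤ), m, m + (n : ℤ)} : Finset ℤ) := by
      intro a ha
      rw [Finset.mem_filter] at ha
      have h2 : max 1 (a - m).natAbs = n := ha.2
      simp only [Finset.mem_insert, Finset.mem_singleton]
      rcases le_total (a - m).natAbs 1 with h | h
      · rw [max_eq_left h] at h2
        omega
      · rw [max_eq_right h] at h2
        omega
    have h3 : ({m - (n : ℤ), m, m + (n : ℤ)} : Finset ℤ).card ≤ 3 := by
      calc ({m - (n : ℤ), m, m + (n : ℤ)} : Finset ℤ).card
          ≤ ({m, m + (n : ℤ)} : Finset ℤ).card + 1 := Finset.card_insert_le _ _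
        _ ≤ (({m + (n : ℤ)} : Finset ℤ).card + 1) + 1 := by
            have := Finset.card_insert_le m ({m + (n : ℤ)} : Finset ℤ)
            omega
        _ = 3 := by simp
    have := Finset.card_le_card hsub
    exact_mod_cast le_trans this h3
  calc ∑ k ∈ s, min (1 / u k) (R / (u k) ^ 2)
      ≤ ∑ k ∈ s, (1 / c) * G (φ k) := Finset.sum_le_sum hpt
    _ = (1 / c) * ∑ k ∈ s, G (φ k) := (Finset.mul_sum _ _ _).symm
    _ = (1 / c) * ∑ n ∈ s.image φ, (s.filter (fun k => φ k = n)).card • G n := by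
        rw [Finset.sum_comp]
    _ ≤ (1 / c) * ∑ n ∈ s.image φ, 3 * G n := by
        apply mul_le_mul_of_nonneg_left _ (by positivity)
        apply Finset.sum_le_sum
        intro n _
        rw [nsmul_eq_mul]
        exact mul_le_mul_of_nonneg_right (cardbound n) (hGnonneg n)
    _ = (3 / c) * ∑ n ∈ s.image φ, G n := by
        rw [← Finset.mul_sum]
        ring
    _ ≤ (3 / c) * (2 + Real.log (R / c + 1)) := by
        apply mul_le_mul_of_nonneg_left _ (by positivity)
        exact lemA (R / c) (by positivity) _

/-- Pointwise bound `R/(uv) ≤ min(1/u, R/u²) + min(1/v, R/v²)` when `R ≤ u + v`. -/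
private lemma lemC_aux {u v R : ℝ} (hu : 0 < u) (hv : 0 < v) (hR : 0 ≤ R) (h : R ≤ u + v)
    (huv : u ≤ v) :
    R / (u * v) ≤ min (1 / u) (R / u ^ 2) + min (1 / v) (R / v ^ 2) := by
  rcases le_total R v with hRv | hvR
  · have h1 : R / (u * v) ≤ 1 / u := by
      rw [div_le_div_iff₀ (by positivity) hu]
      nlinarith
    have h2 : R / (u * v) ≤ R / u ^ 2 := by
      apply div_le_div_of_nonneg_left hR (by positivity)
      nlinarith
    have hmin : R / (u * v) ≤ min (1 / u) (R / u ^ 2) := le_min h1 h2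
    have hnn : 0 ≤ min (1 / v) (R / v ^ 2) := le_min (by positivity) (by positivity)
    linarith
  · have huR : u ≤ R := le_trans huv hvR
    have m1 : min (1 / u) (R / u ^ 2) = 1 / u := by
      apply min_eq_left
      rw [div_le_div_iff₀ hu (by positivity)]
      nlinarith
    have m2 : min (1 / v) (R / v ^ 2) = 1 / v := by
      apply min_eq_left
      rw [div_le_div_iff₀ hv (by positivity)]
      nlinarith
    rw [m1, m2, div_le_iff₀ (by positivity)]
    have e : (1 / u + 1 / v) * (u * v) = u + v := by field_simp; ring
    rw [e]
    exact h

private lemma lemC {u v R : ℝ} (hu : 0 < u) (hv : 0 < v) (hR : 0 ≤ R) (h : R ≤ u + v) :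
    R / (u * v) ≤ min (1 / u) (R / u ^ 2) + min (1 / v) (R / v ^ 2) := by
  rcases le_total u v with huv | hvu
  · exact lemC_aux hu hv hR h huv
  · have := lemC_aux hv hu hR (by linarith) hvu
    rw [mul_comm] at this
    linarith

/-- Existence of a "nearest index": from the separation and distance hypotheses,
`|z - x k| ≥ (lam/2)·max(1, |k - m|)` for some `m`. -/
private lemma lemD {lam : ℝ} (hlam : 0 < lam) (x : ℤ → ℝ) (hgap : ∀ k, lam ≤ x (k + 1) - x k)
    (z : ℝ) (hz : ∀ k, lam / 2 ≤ |z - x k|) :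
    ∃ m : ℤ, ∀ k : ℤ, lam / 2 * max 1 |(k : ℝ) - (m : ℝ)| ≤ |z - x k| := by
  have grow : ∀ j k : ℤ, j ≤ k → lam * ((k : ℝ) - (j : ℝ)) ≤ x k - x j := by
    intro j k hjk
    refine Int.le_induction (motive := fun n _ => lam * ((n : ℝ) - (j : ℝ)) ≤ x n - x j)
      (by simp) ?_ k hjk
    intro n _ ih
    have h1 := hgap n
    push_cast
    push_cast at ih
    linarith
  have hne : ∃ k : ℤ, x k ≤ z := by
    set k0 : ℤ := min 0 ⌊(z - x 0) / lam⌋ with hk0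
    refine ⟨k0, ?_⟩
    have hk00 : k0 ≤ 0 := min_le_left _ _
    have h1 : lam * ((0 : ℝ) - (k0 : ℝ)) ≤ x 0 - x k0 := by
      have := grow k0 0 hk00
      push_cast at this ⊢
      linarith
    have h2 : (k0 : ℝ) ≤ (z - x 0) / lam := by
      have hf : (k0 : ℝ) ≤ (⌊(z - x 0) / lam⌋ : ℝ) := by
        exact_mod_cast min_le_right 0 ⌊(z - x 0) / lam⌋
      exact le_trans hf (Int.floor_le _)
    have h3 : (k0 : ℝ) * lam ≤ z - x 0 := by
      rw [← le_div_iff₀ hlam]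
      exact h2
    nlinarith
  have hbd : ∃ b : ℤ, ∀ k : ℤ, x k ≤ z → k ≤ b := by
    refine ⟨max 0 ⌈(z - x 0) / lam⌉, fun k hk => ?_⟩
    rcases le_total k 0 with h | h
    · exact le_trans h (le_max_left _ _)
    · have h1 : lam * ((k : ℝ) - (0 : ℝ)) ≤ x k - x 0 := by
        have := grow 0 k h
        push_cast at this ⊢
        linarith
      have h2 : (k : ℝ) ≤ (z - x 0) / lam := by
        rw [le_div_iff₀ hlam]
        nlinarith
      have h3 : k ≤ ⌈(z - x 0) / lam⌉ := by
        have := Int.ceil_le_ceil h2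
        rwa [Int.ceil_intCast] at this
      exact le_trans h3 (le_max_right _ _)
  obtain ⟨m, hmP, hmax⟩ := Int.exists_greatest_of_bdd hbd hne
  refine ⟨m, fun k => ?_⟩
  rcases le_or_gt k m with hkm | hmk
  · have h1 : lam * ((m : ℝ) - (k : ℝ)) ≤ x m - x k := grow k m hkm
    have h2 : lam / 2 ≤ z - x m := by
      have ha := hz m
      rw [abs_of_nonneg (by linarith [hmP] : (0 : ℝ) ≤ z - x m)] at ha
      exact ha
    have ht : (0 : ℝ) ≤ (m : ℝ) - (k : ℝ) := by
      have : (k : ℝ) ≤ (m : ℝ) := by exact_mod_cast hkm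
      linarith
    have habs : |z - x k| = z - x k := abs_of_nonneg (by nlinarith)
    have hm' : |(k : ℝ) - (m : ℝ)| = (m : ℝ) - (k : ℝ) := by
      rw [abs_sub_comm]
      exact abs_of_nonneg ht
    rw [habs, hm']
    calc lam / 2 * max 1 ((m : ℝ) - (k : ℝ)) ≤ lam / 2 * (1 + 2 * ((m : ℝ) - (k : ℝ))) := by
          apply mul_le_mul_of_nonneg_left _ (by positivity)
          apply max_le <;> linarith
      _ = lam / 2 + lam * ((m : ℝ) - (k : ℝ)) := by ring
      _ ≤ z - x k := by linarith
  · have hk1 : m + 1 ≤ k := hmk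
    have h1 : lam * ((k : ℝ) - ((m : ℝ) + 1)) ≤ x k - x (m + 1) := by
      have := grow (m + 1) k hk1
      push_cast at this ⊢
      linarith
    have hzm : z < x (m + 1) := by
      by_contra hcon
      push_neg at hcon
      have := hmax (m + 1) hcon
      omega
    have h2 : lam / 2 ≤ x (m + 1) - z := by
      have ha := hz (m + 1)
      rw [abs_sub_comm, abs_of_nonneg (by linarith : (0 : ℝ) ≤ x (m + 1) - z)] at ha
      exact ha
    have ht : (1 : ℝ) ≤ (k : ℝ) - (m : ℝ) := by
      have : ((m : ℝ) + 1) ≤ (k : ℝ) := by exact_mod_cast hk1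
      linarith
    have habs : |z - x k| = x k - z := by
      rw [abs_sub_comm]
      exact abs_of_nonneg (by nlinarith)
    have hm' : |(k : ℝ) - (m : ℝ)| = (k : ℝ) - (m : ℝ) := abs_of_nonneg (by linarith)
    rw [habs, hm', max_eq_right ht]
    nlinarith

/-- Key summation estimate: for a separated sequence `x : ℤ → ℝ` with gaps between
`lam` and `d`, and real points `z ≠ x̃` both at distance at least `lam/2` from the
sequence, `∑ₖ |z - x̃| / (|z - xₖ| |x̃ - xₖ|) ≤ C (1 + log⁺ |z - x̃|)` where `C`
depends only on `lam` and `d`. -/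
theorem summation_log_estimate (lam d : ℝ) (hlam : 0 < lam) (hd : lam ≤ d) :
    ∃ C : ℝ, 0 < C ∧ ∀ x : ℤ → ℝ,
      (∀ k, lam ≤ x (k + 1) - x k) → (∀ k, x (k + 1) - x k ≤ d) →
      ∀ z xt : ℝ, z ≠ xt →
      (∀ k, lam / 2 ≤ |z - x k|) → (∀ k, lam / 2 ≤ |xt - x k|) →
      ∑' k : ℤ, |z - xt| / (|z - x k| * |xt - x k|) ≤
        C * (1 + max (Real.log |z - xt|) 0) := by
  have h2lam : (0 : ℝ) < 2 / lam := div_pos two_pos hlam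
  have hA : (0 : ℝ) ≤ Real.log (2 / lam + 1) := Real.log_nonneg (by linarith)
  have hlog2 : (0 : ℝ) ≤ Real.log 2 := Real.log_nonneg one_le_two
  have hCpos : (0 : ℝ) < 12 / lam * (2 + Real.log (2 / lam + 1) + Real.log 2) :=
    mul_pos (div_pos (by norm_num) hlam) (by linarith)
  refine ⟨12 / lam * (2 + Real.log (2 / lam + 1) + Real.log 2), hCpos, ?_⟩
  intro x hgapl hgapu z xt hne hz hxt
  set R := |z - xt| with hR
  have hRpos : 0 < R := abs_pos.mpr (sub_ne_zero.mpr hne)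
  have hc : (0 : ℝ) < lam / 2 := by positivity
  obtain ⟨m, hm⟩ := lemD hlam x hgapl z hz
  obtain ⟨n, hn⟩ := lemD hlam x hgapl xt hxt
  set t := max (Real.log R) 0 with htdef
  have ht0 : 0 ≤ t := le_max_right _ _
  -- final arithmetic bound
  have final : 2 * (3 / (lam / 2) * (2 + Real.log (R / (lam / 2) + 1)))
      ≤ 12 / lam * (2 + Real.log (2 / lam + 1) + Real.log 2) * (1 + t) := by
    have e0 : 3 / (lam / 2) = 6 / lam := by
      rw [div_div_eq_mul_div]
      norm_num
    have hL : Real.log (R / (lam / 2) + 1)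
        ≤ Real.log (2 / lam + 1) + Real.log 2 + t := by
      have harg : R / (lam / 2) + 1 ≤ (2 / lam + 1) * (R + 1) := by
        have e1 : R / (lam / 2) = R * (2 / lam) := by
          rw [div_div_eq_mul_div]
          ring
        have h2l : (0 : ℝ) ≤ 2 / lam := by positivity
        have e2 : (2 / lam + 1) * (R + 1) = R * (2 / lam) + 2 / lam + R + 1 := by ring
        rw [e1, e2]
        linarith
      have hpos1 : (0 : ℝ) < R / (lam / 2) + 1 := by positivity
      have hstep : Real.log (R / (lam / 2) + 1) ≤ Real.log ((2 / lam + 1) * (R + 1)) :=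
        Real.log_le_log hpos1 harg
      have hmul : Real.log ((2 / lam + 1) * (R + 1))
          = Real.log (2 / lam + 1) + Real.log (R + 1) :=
        Real.log_mul (by positivity) (by positivity)
      have hlast : Real.log (R + 1) ≤ Real.log 2 + t := by
        rcases le_total R 1 with h1 | h1
        · have : Real.log (R + 1) ≤ Real.log 2 := Real.log_le_log (by positivity) (by linarith)
          linarith
        · have h2 : Real.log (R + 1) ≤ Real.log (2 * R) :=
            Real.log_le_log (by positivity) (by linarith)
          have h3 : Real.log (2 * R) = Real.log 2 + Real.log R :=
            Real.log_mul (by norm_num) (by positivity)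
          have h4 : Real.log R ≤ t := le_max_left _ _
          linarith
      rw [hmul] at hstep
      linarith
    have e6 : (0 : ℝ) < 12 / lam := by positivity
    have key : 2 + Real.log (R / (lam / 2) + 1)
        ≤ (2 + Real.log (2 / lam + 1) + Real.log 2) * (1 + t) := by
      have hA1 : (1 : ℝ) ≤ 2 + Real.log (2 / lam + 1) + Real.log 2 := by linarith
      nlinarith [mul_le_mul_of_nonneg_right hA1 ht0]
    calc 2 * (3 / (lam / 2) * (2 + Real.log (R / (lam / 2) + 1)))
        = 12 / lam * (2 + Real.log (R / (lam / 2) + 1)) := by rw [e0]; ring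
      _ ≤ 12 / lam * ((2 + Real.log (2 / lam + 1) + Real.log 2) * (1 + t)) :=
          mul_le_mul_of_nonneg_left key (le_of_lt e6)
      _ = 12 / lam * (2 + Real.log (2 / lam + 1) + Real.log 2) * (1 + t) := by ring
  apply tsum_le_of_sum_le' (mul_nonneg hCpos.le (by linarith))
  intro s
  have hptw : ∀ k ∈ s, R / (|z - x k| * |xt - x k|)
      ≤ min (1 / |z - x k|) (R / |z - x k| ^ 2) + min (1 / |xt - x k|) (R / |xt - x k| ^ 2) := by
    intro k _
    apply lemC (lt_of_lt_of_le hc (hz k)) (lt_of_lt_of_le hc (hxt k)) (le_of_lt hRpos)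
    calc R = |z - xt| := hR
      _ ≤ |z - x k| + |x k - xt| := abs_sub_le z (x k) xt
      _ = |z - x k| + |xt - x k| := by rw [abs_sub_comm (x k) xt]
  calc ∑ k ∈ s, R / (|z - x k| * |xt - x k|)
      ≤ ∑ k ∈ s, (min (1 / |z - x k|) (R / |z - x k| ^ 2)
          + min (1 / |xt - x k|) (R / |xt - x k| ^ 2)) := Finset.sum_le_sum hptw
    _ = ∑ k ∈ s, min (1 / |z - x k|) (R / |z - x k| ^ 2)
          + ∑ k ∈ s, min (1 / |xt - x k|) (R / |xt - x k| ^ 2) := Finset.sum_add_distrib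
    _ ≤ 3 / (lam / 2) * (2 + Real.log (R / (lam / 2) + 1))
          + 3 / (lam / 2) * (2 + Real.log (R / (lam / 2) + 1)) := by
        apply add_le_add
        · exact lemB hc (le_of_lt hRpos) m (fun k => |z - x k|) hm s
        · exact lemB hc (le_of_lt hRpos) n (fun k => |xt - x k|) hn s
    _ = 2 * (3 / (lam / 2) * (2 + Real.log (R / (lam / 2) + 1))) := by ring
    _ ≤ 12 / lam * (2 + Real.log (2 / lam + 1) + Real.log 2) * (1 + t) := final
end
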